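/- Let (X,d) be a metric space, {x_n}_{n≥0} a sequence in X, and m : X × X → [0,∞) a nonnegative function such that for any two subsequences {x_{p_n}} and {x_{q_n}}, limsup_{n→∞} m(x_{p_n}, x_{q_n}) ≤ limsup_{n→∞} d(x_{p_n}, x_{q_n}). Suppose d(x_n, x_{n+1}) → 0, and suppose that for every ε > 0 there exists a sequence {ν_n} of nonnegative integers such that for any two subsequences {x_{p_n}} and {x_{q_n}}, if limsup_{n→∞} m(x_{p_n}, x_{q_n}) ≤ ε then there exists N with d(x_{p_n+ν_n}, x_{q_n+ν_n}) ≤ ε for all n ≥ N. Then {x_n} is a Cauchy sequence. -/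

import Mathlib

open Filter

private lemma chainBound {X : Type*} [MetricSpace X] (x : ℕ → X) (c : ℕ) (δ : ℝ)
    (hstep : ∀ t ≥ c, dist (x t) (x (t + 1)) ≤ δ) :
    ∀ a ≥ c, ∀ t : ℕ, dist (x a) (x (a + t)) ≤ t * δ := by
  intro a ha t
  induction t with
  | zero => simp
  | succ t ih =>
    have h1 : dist (x a) (x (a + t + 1)) ≤ dist (x a) (x (a + t)) + dist (x (a + t)) (x (a + t + 1)) :=
      dist_triangle _ _ _
    have h2 := hstep (a + t) (le_trans ha (Nat.le_add_right a t))
    have h3 : a + (t + 1) = a + t + 1 := by omega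
    rw [h3]
    push_cast
    linarith

private lemma pairA {X : Type*} [MetricSpace X] (x : ℕ → X) (ε : ℝ) (hε : 0 < ε)
    (hd : Tendsto (fun n => dist (x n) (x (n + 1))) atTop (nhds 0))
    (hbad : ∀ N : ℕ, ∃ i ≥ N, ∃ j ≥ N, ε ≤ dist (x i) (x j))
    (n k M : ℕ) :
    ∃ p q : ℕ, M < p ∧ M < q ∧ ε / 2 < dist (x (p + k)) (x (q + k)) ∧
      dist (x p) (x q) ≤ ε / 2 + 3 * (1 / ((n : ℝ) + 1)) := by
  classical
  set δ : ℝ := 1 / (((n : ℝ) + 1) * ((k : ℝ) + 1)) with hδdef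
  have hδ : 0 < δ := by rw [hδdef]; positivity
  obtain ⟨c, hc⟩ := Metric.tendsto_atTop.mp hd δ hδ
  have hstep : ∀ t ≥ c, dist (x t) (x (t + 1)) ≤ δ := by
    intro t ht
    have := hc t ht
    rw [Real.dist_0_eq_abs] at this
    exact le_of_lt (lt_of_le_of_lt (le_abs_self _) this)
  set C : ℕ := max c (M + 1) with hCdef
  have hcC : c ≤ C := le_max_left _ _
  have hMC : M + 1 ≤ C := le_max_right _ _
  have hk0 : (0 : ℝ) ≤ (k : ℝ) := Nat.cast_nonneg k
  have hone : ((k : ℝ) + 1) * δ = 1 / ((n : ℝ) + 1) := by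
    rw [hδdef]; field_simp
  have hkδ : (k : ℝ) * δ ≤ 1 / ((n : ℝ) + 1) := by nlinarith [hδ.le]
  have hδle : δ ≤ 1 / ((n : ℝ) + 1) := by nlinarith [hδ.le]
  have key : ∀ i j : ℕ, C + k ≤ i → C + k ≤ j → i < j → ε ≤ dist (x i) (x j) →
      ∃ p q : ℕ, M < p ∧ M < q ∧ ε / 2 < dist (x (p + k)) (x (q + k)) ∧
        dist (x p) (x q) ≤ ε / 2 + 3 * (1 / ((n : ℝ) + 1)) := by
    intro i j hi hj hlt hdij
    have hex : ∃ b, i < b ∧ b ≤ j ∧ ε / 2 < dist (x i) (x b) :=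
      ⟨j, hlt, le_refl j, by linarith⟩
    obtain ⟨b, hb1, hb2, hb3, hbmin⟩ : ∃ b, i < b ∧ b ≤ j ∧ ε / 2 < dist (x i) (x b) ∧
        ∀ b' < b, ¬(i < b' ∧ b' ≤ j ∧ ε / 2 < dist (x i) (x b')) :=
      ⟨Nat.find hex, (Nat.find_spec hex).1, (Nat.find_spec hex).2.1, (Nat.find_spec hex).2.2,
        fun b' hb' => Nat.find_min hex hb'⟩
    have hprev : dist (x i) (x (b - 1)) ≤ ε / 2 := by
      rcases eq_or_lt_of_le (show i ≤ b - 1 by omega) with hcase | hcase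
      · rw [← hcase, dist_self]; linarith
      · by_contra hcon
        exact hbmin (b - 1) (by omega) ⟨hcase, by omega, lt_of_not_ge hcon⟩
    have hstep' := hstep (b - 1) (by omega)
    have hb' : b - 1 + 1 = b := by omega
    rw [hb'] at hstep'
    have htri := dist_triangle (x i) (x (b - 1)) (x b)
    have hbstep : dist (x i) (x b) ≤ ε / 2 + δ := by linarith
    have hpk : i - k + k = i := by omega
    have hqk : b - k + k = b := by omega
    refine ⟨i - k, b - k, by omega, by omega, ?_, ?_⟩
    · rw [hpk, hqk]; exact hb3
    · have hdp : dist (x (i - k)) (x i) ≤ (k : ℝ) * δ := by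
        have := chainBound x c δ hstep (i - k) (by omega) k
        rwa [hpk] at this
      have hdq : dist (x (b - k)) (x b) ≤ (k : ℝ) * δ := by
        have := chainBound x c δ hstep (b - k) (by omega) k
        rwa [hqk] at this
      have h5 : dist (x (i - k)) (x (b - k)) ≤
          dist (x (i - k)) (x i) + dist (x i) (x b) + dist (x b) (x (b - k)) :=
        dist_triangle4 _ _ _ _
      rw [dist_comm (x b) (x (b - k))] at h5
      linarith
  obtain ⟨i, hi, j, hj, hij⟩ := hbad (C + k)
  rcases lt_trichotomy i j with hlt | heq | hgt
  · exact key i j hi hj hlt hij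
  · exfalso; rw [heq, dist_self] at hij; linarith
  · rw [dist_comm] at hij
    exact key j i hj hi hgt hij

/-- Theorem 2.3. -/
theorem stmt1 {X : Type*} [MetricSpace X] (x : ℕ → X) (m : X → X → ℝ)
    (hm0 : ∀ a b : X, 0 ≤ m a b)
    (hm : ∀ p q : ℕ → ℕ, StrictMono p → StrictMono q →
      limsup (fun n => m (x (p n)) (x (q n))) atTop ≤
      limsup (fun n => dist (x (p n)) (x (q n))) atTop)
    (hd : Tendsto (fun n => dist (x n) (x (n + 1))) atTop (nhds 0))
    (h : ∀ ε : ℝ, 0 < ε → ∃ ν : ℕ → ℕ,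
      ∀ p q : ℕ → ℕ, StrictMono p → StrictMono q →
        limsup (fun n => m (x (p n)) (x (q n))) atTop ≤ ε →
        ∃ N : ℕ, ∀ n ≥ N, dist (x (p n + ν n)) (x (q n + ν n)) ≤ ε) :
    CauchySeq x := by
  by_contra hC
  rw [Metric.cauchySeq_iff] at hC
  push_neg at hC
  obtain ⟨ε, hε, hbad⟩ := hC
  obtain ⟨ν, hν⟩ := h (ε / 2) (by positivity)
  have hA : ∀ n M : ℕ, ∃ p q : ℕ, M < p ∧ M < q ∧
      ε / 2 < dist (x (p + ν n)) (x (q + ν n)) ∧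
      dist (x p) (x q) ≤ ε / 2 + 3 * (1 / ((n : ℝ) + 1)) := fun n M => by
    have hbad' : ∀ N : ℕ, ∃ i ≥ N, ∃ j ≥ N, ε ≤ dist (x i) (x j) := by
      intro N
      obtain ⟨i, hi, j, hj, hij⟩ := hbad N
      exact ⟨i, hi, j, hj, hij⟩
    exact pairA x ε hε hd hbad' n (ν n) M
  choose P Q h1 h2 h3 h4 using hA
  let Ms : ℕ → ℕ := fun n => Nat.rec 0 (fun m ih => max (P m ih) (Q m ih)) n
  let pn : ℕ → ℕ := fun n => P n (Ms n)
  let qn : ℕ → ℕ := fun n => Q n (Ms n)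
  have hMs : ∀ n, Ms (n + 1) = max (pn n) (qn n) := fun n => rfl
  have spn : StrictMono pn := by
    apply strictMono_nat_of_lt_succ
    intro n
    have hlt := h1 (n + 1) (Ms (n + 1))
    have hle : pn n ≤ Ms (n + 1) := by rw [hMs]; exact le_max_left _ _
    exact lt_of_le_of_lt hle hlt
  have sqn : StrictMono qn := by
    apply strictMono_nat_of_lt_succ
    intro n
    have hlt := h2 (n + 1) (Ms (n + 1))
    have hle : qn n ≤ Ms (n + 1) := by rw [hMs]; exact le_max_right _ _
    exact lt_of_le_of_lt hle hlt
  have hg : Tendsto (fun n : ℕ => ε / 2 + 3 * (1 / ((n : ℝ) + 1))) atTop (nhds (ε / 2)) := by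
    have h0 : Tendsto (fun n : ℕ => 1 / ((n : ℝ) + 1)) atTop (nhds 0) :=
      tendsto_one_div_add_atTop_nhds_zero_nat
    have h1' := h0.const_mul (3 : ℝ)
    simpa using tendsto_const_nhds.add h1'
  have hL : limsup (fun n => dist (x (pn n)) (x (qn n))) atTop ≤ ε / 2 := by
    have hub : ∀ n, dist (x (pn n)) (x (qn n)) ≤ ε / 2 + 3 * (1 / ((n : ℝ) + 1)) :=
      fun n => h4 n (Ms n)
    have hcb : IsCoboundedUnder (· ≤ ·) atTop (fun n => dist (x (pn n)) (x (qn n))) :=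
      isCoboundedUnder_le_of_le atTop (x := 0) fun n => dist_nonneg
    calc limsup (fun n => dist (x (pn n)) (x (qn n))) atTop
        ≤ limsup (fun n : ℕ => ε / 2 + 3 * (1 / ((n : ℝ) + 1))) atTop :=
          limsup_le_limsup (Eventually.of_forall hub) hcb hg.isBoundedUnder_le
      _ = ε / 2 := hg.limsup_eq
  have hmL : limsup (fun n => m (x (pn n)) (x (qn n))) atTop ≤ ε / 2 :=
    le_trans (hm pn qn spn sqn) hL
  obtain ⟨N, hN⟩ := hν pn qn spn sqn hmL
  have hup := hN N le_rfl
  have hlo : ε / 2 < dist (x (pn N + ν N)) (x (qn N + ν N)) := h3 N (Ms N)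
  linarith
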